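/- Suppose φ is real-analytic on 𝕋³ with φ(0) = 0 and let μ₀ = (∫_{𝕋³} φ(t)²/u(0,t) dt)^{−1} (assume φ not identically 0). Then f(q) = φ(q)/u(0,q) belongs to L²(𝕋³) and satisfies h_{μ₀}(0)f = 0, i.e., 0 is an eigenvalue of h_{μ₀}(0). -/

import Mathlib

open Real MeasureTheory

noncomputable def eps (p : Fin 3 → ℝ) : ℝ := 3 - Real.cos (p 0) - Real.cos (p 1) - Real.cos (p 2)

noncomputable def uu (p q : Fin 3 → ℝ) : ℝ := eps p + eps (p - q) + eps q

/-- The torus `𝕋³`, identified with the cube `(-π, π]³`. -/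
def T3 : Set (Fin 3 → ℝ) := Set.univ.pi fun _ => Set.Ioc (-Real.pi) Real.pi

/-- `m(p) = min_{q ∈ 𝕋³} u(p,q)`, the bottom of the essential spectrum. -/
noncomputable def mfun (p : Fin 3 → ℝ) : ℝ := sInf (uu p '' T3)

/-- The Fredholm determinant `Δ_μ(p,z) = 1 - μ ∫_{𝕋³} φ(t)²/(u(p,t) - z) dt`. -/
noncomputable def Δ (μ : ℝ) (φ : (Fin 3 → ℝ) → ℝ) (p : Fin 3 → ℝ) (z : ℝ) : ℝ :=
  1 - μ * ∫ t in T3, φ t ^ 2 / (uu p t - z)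

lemma uu_zero (q : Fin 3 → ℝ) : uu 0 q = 2 * eps q := by
  simp [uu, eps, Pi.sub_apply, Real.cos_neg]; ring

lemma eps_nonneg (q : Fin 3 → ℝ) : 0 ≤ eps q := by
  have h0 := Real.cos_le_one (q 0); have h1 := Real.cos_le_one (q 1)
  have h2 := Real.cos_le_one (q 2); unfold eps; linarith

lemma eps_lb {q : Fin 3 → ℝ} (h : ∀ i, |q i| ≤ π) : 2 / (3 * π ^ 2) * ‖q‖ ^ 2 ≤ eps q := by
  have hpi : (0:ℝ) < π ^ 2 := by positivity
  have key : ∀ i, 2 * q i ^ 2 ≤ π ^ 2 * (1 - Real.cos (q i)) := by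
    intro i
    have hb := Real.cos_le_one_sub_mul_cos_sq (h i)
    have h2 := mul_le_mul_of_nonneg_left hb hpi.le
    have he : π ^ 2 * (1 - 2 / π ^ 2 * q i ^ 2) = π ^ 2 - 2 * q i ^ 2 := by field_simp
    rw [he] at h2; linarith
  have hn : ‖q‖ ≤ |q 0| + |q 1| + |q 2| := by
    apply pi_norm_le_iff_of_nonneg (by positivity) |>.2
    intro i
    fin_cases i
    · show |q 0| ≤ _; nlinarith [abs_nonneg (q 1), abs_nonneg (q 2)]
    · show |q 1| ≤ _; nlinarith [abs_nonneg (q 0), abs_nonneg (q 2)]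
    · show |q 2| ≤ _; nlinarith [abs_nonneg (q 0), abs_nonneg (q 1)]
  have hq : ‖q‖ ^ 2 ≤ 3 * ((q 0) ^ 2 + (q 1) ^ 2 + (q 2) ^ 2) := by
    have h0 : (0:ℝ) ≤ ‖q‖ := norm_nonneg q
    nlinarith [sq_nonneg (|q 0| - |q 1|), sq_nonneg (|q 0| - |q 2|), sq_nonneg (|q 1| - |q 2|),
      sq_abs (q 0), sq_abs (q 1), sq_abs (q 2)]
  have h0 := key 0; have h1 := key 1; have h2 := key 2
  unfold eps
  rw [div_mul_eq_mul_div, div_le_iff₀ (by positivity)]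
  linarith

lemma eps_pos {q : Fin 3 → ℝ} (h : ∀ i, |q i| ≤ π) (hq : q ≠ 0) : 0 < eps q := by
  have hex : ∃ i, q i ≠ 0 := by
    by_contra hc; push_neg at hc; exact hq (funext hc)
  obtain ⟨i, hi⟩ := hex
  have hlt : Real.cos (q i) < 1 := by
    have h1 : Real.cos (q i) ≤ 1 := Real.cos_le_one _
    rcases h1.lt_or_eq with hlt' | heq
    · exact hlt'
    · exfalso
      have habs := h i
      have := (Real.cos_eq_one_iff_of_lt_of_lt (x := q i)
        (by nlinarith [Real.pi_pos, abs_le.1 habs |>.1])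
        (by nlinarith [Real.pi_pos, abs_le.1 habs |>.2])).1 heq
      exact hi this
  have c0 := Real.cos_le_one (q 0); have c1 := Real.cos_le_one (q 1)
  have c2 := Real.cos_le_one (q 2)
  unfold eps; fin_cases i <;> simp_all <;> linarith

lemma taylor_bound (φ : (Fin 3 → ℝ) → ℝ) (hφ : AnalyticAt ℝ φ 0)
    (hev : ∀ t, φ (-t) = φ t) (hφ0 : φ 0 = 0) :
    ∃ C > 0, ∃ r > 0, ∀ y : Fin 3 → ℝ, ‖y‖ < r → |φ y| ≤ C * ‖y‖ ^ 2 := by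
  obtain ⟨p, hp⟩ := hφ
  -- derivative at 0 is 0
  have hD : HasFDerivAt φ (continuousMultilinearCurryFin1 ℝ (Fin 3 → ℝ) ℝ (p 1)) 0 :=
    hp.hasFDerivAt
  set D := continuousMultilinearCurryFin1 ℝ (Fin 3 → ℝ) ℝ (p 1) with hDdef
  have hDzero : D = 0 := by
    have hneg : HasFDerivAt (fun t : Fin 3 → ℝ => -t)
        (-(ContinuousLinearMap.id ℝ (Fin 3 → ℝ))) 0 := (hasFDerivAt_id (0 : Fin 3 → ℝ)).neg
    have hD' : HasFDerivAt φ D (-(0 : Fin 3 → ℝ)) := by rw [neg_zero]; exact hD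
    have hcomp : HasFDerivAt (fun t => φ (-t))
        (D.comp (-(ContinuousLinearMap.id ℝ (Fin 3 → ℝ)))) 0 := hD'.comp 0 hneg
    have heq : (fun t : Fin 3 → ℝ => φ (-t)) = φ := funext hev
    rw [heq] at hcomp
    have huniq : D.comp (-(ContinuousLinearMap.id ℝ (Fin 3 → ℝ))) = D :=
      hcomp.unique hD
    ext y
    have := congrArg (fun L : (Fin 3 → ℝ) →L[ℝ] ℝ => L y) huniq
    simp only [ContinuousLinearMap.comp_apply, ContinuousLinearMap.neg_apply,
      ContinuousLinearMap.id_apply, map_neg] at this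
    simp only [ContinuousLinearMap.zero_apply]
    linarith
  have hps : ∀ y : Fin 3 → ℝ, p.partialSum 2 y = 0 := by
    intro y
    have h0 : p 0 (fun _ => y) = 0 := by
      rw [hp.coeff_zero]; exact hφ0
    have h1 : p 1 (fun _ => y) = 0 := by
      have : D y = p 1 (fun _ => y) := by
        rw [hDdef, continuousMultilinearCurryFin1_apply]
        congr 1
      rw [← this, hDzero]; rfl
    simp [FormalMultilinearSeries.partialSum, Finset.sum_range_succ, h0, h1]
  have hbig := hp.isBigO_sub_partialSum_pow 2
  rw [Asymptotics.isBigO_iff] at hbig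
  obtain ⟨C, hC⟩ := hbig
  rw [Metric.eventually_nhds_iff] at hC
  obtain ⟨r, hr, hball⟩ := hC
  refine ⟨max C 1, lt_max_of_lt_right one_pos, r, hr, fun y hy => ?_⟩
  have := hball (show dist y 0 < r by simpa [dist_zero_right] using hy)
  simp only [zero_add, hps, sub_zero, Real.norm_eq_abs, norm_pow] at this
  calc |φ y| ≤ C * |‖y‖| ^ 2 := this
    _ ≤ max C 1 * ‖y‖ ^ 2 := by
        have : |‖y‖| = ‖y‖ := abs_of_nonneg (norm_nonneg y)
        rw [this]
        exact mul_le_mul_of_nonneg_right (le_max_left C 1) (by positivity)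

lemma T3_abs_le {q : Fin 3 → ℝ} (hq : q ∈ T3) : ∀ i, |q i| ≤ π := by
  intro i
  have := hq i (Set.mem_univ i)
  rw [abs_le]; exact ⟨(this.1).le, this.2⟩

lemma phi_quad_bound (φ : (Fin 3 → ℝ) → ℝ) (hφ : ∀ x, AnalyticAt ℝ φ x)
    (hev : ∀ t, φ (-t) = φ t) (hφ0 : φ 0 = 0) :
    ∃ C > 0, ∀ q ∈ T3, |φ q| ≤ C * ‖q‖ ^ 2 := by
  obtain ⟨C, hC, r, hr, hball⟩ := taylor_bound φ (hφ 0) hev hφ0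
  have hcont : Continuous φ := continuous_iff_continuousAt.2 fun x => (hφ x).continuousAt
  have hcomp : IsCompact (Set.univ.pi fun _ : Fin 3 => Set.Icc (-π) π) :=
    isCompact_univ_pi fun _ => isCompact_Icc
  obtain ⟨M, hM⟩ := hcomp.exists_bound_of_continuousOn hcont.continuousOn
  have hM0 : 0 ≤ M := le_trans (norm_nonneg _) (hM 0 (by
    intro i _
    simp only [Pi.zero_apply, Set.mem_Icc]
    constructor <;> linarith [Real.pi_pos]))
  refine ⟨max C (M / r ^ 2) + 1, by positivity, fun q hq => ?_⟩
  have hsub : q ∈ Set.univ.pi fun _ : Fin 3 => Set.Icc (-π) π := by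
    intro i _
    have := T3_abs_le hq i
    exact Set.mem_Icc.2 (abs_le.1 this)
  rcases lt_or_ge ‖q‖ r with h | h
  · calc |φ q| ≤ C * ‖q‖ ^ 2 := hball q h
      _ ≤ (max C (M / r ^ 2) + 1) * ‖q‖ ^ 2 := by
          apply mul_le_mul_of_nonneg_right _ (by positivity)
          exact le_trans (le_max_left _ _) (le_add_of_nonneg_right zero_le_one)
  · have h1 : |φ q| ≤ M := by simpa [Real.norm_eq_abs] using hM q hsub
    have h2 : M ≤ (M / r ^ 2) * ‖q‖ ^ 2 := by
      rw [div_mul_eq_mul_div, le_div_iff₀ (by positivity)]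
      have : r ^ 2 ≤ ‖q‖ ^ 2 := by nlinarith [norm_nonneg q]
      nlinarith
    calc |φ q| ≤ (M / r ^ 2) * ‖q‖ ^ 2 := le_trans h1 h2
      _ ≤ (max C (M / r ^ 2) + 1) * ‖q‖ ^ 2 := by
          apply mul_le_mul_of_nonneg_right _ (by positivity)
          exact le_trans (le_max_right _ _) (le_add_of_nonneg_right zero_le_one)

lemma ratio_bound (φ : (Fin 3 → ℝ) → ℝ) (hφ : ∀ x, AnalyticAt ℝ φ x)
    (hev : ∀ t, φ (-t) = φ t) (hφ0 : φ 0 = 0) :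
    ∃ B > 0, ∀ q ∈ T3, |φ q / uu 0 q| ≤ B := by
  obtain ⟨C, hC, hb⟩ := phi_quad_bound φ hφ hev hφ0
  refine ⟨3 * π ^ 2 * C / 4 + 1, by positivity, fun q hq => ?_⟩
  rcases eq_or_ne q 0 with rfl | hq0
  · simp [hφ0]; positivity
  · have habs := T3_abs_le hq
    have hu : 0 < uu 0 q := by rw [uu_zero]; linarith [eps_pos habs hq0]
    have hlb : 4 / (3 * π ^ 2) * ‖q‖ ^ 2 ≤ uu 0 q := by
      rw [uu_zero]
      have := eps_lb habs
      calc 4 / (3 * π ^ 2) * ‖q‖ ^ 2 = 2 * (2 / (3 * π ^ 2) * ‖q‖ ^ 2) := by ring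
        _ ≤ 2 * eps q := by
            have h2 := mul_le_mul_of_nonneg_left this (by norm_num : (0:ℝ) ≤ 2)
            linarith
    rw [abs_div, abs_of_pos hu, div_le_iff₀ hu]
    calc |φ q| ≤ C * ‖q‖ ^ 2 := hb q hq
      _ ≤ (3 * π ^ 2 * C / 4 + 1) * (4 / (3 * π ^ 2) * ‖q‖ ^ 2) := by
          have hpi : (0:ℝ) < π ^ 2 := by positivity
          have hn : (0:ℝ) ≤ ‖q‖ ^ 2 := by positivity
          rw [show (3 * π ^ 2 * C / 4 + 1) * (4 / (3 * π ^ 2) * ‖q‖ ^ 2)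
              = (C + 4 / (3 * π ^ 2)) * ‖q‖ ^ 2 by field_simp]
          apply mul_le_mul_of_nonneg_right _ hn
          have h4 : (0:ℝ) < 4 / (3 * π ^ 2) := by positivity
          linarith
      _ ≤ (3 * π ^ 2 * C / 4 + 1) * uu 0 q := by
          apply mul_le_mul_of_nonneg_left hlb (by positivity)

lemma measT3 : MeasurableSet T3 := MeasurableSet.univ_pi fun _ => measurableSet_Ioc

lemma uu_cont : Continuous (uu 0) := by
  unfold uu eps
  fun_prop

lemma T3_finite : IsFiniteMeasure (volume.restrict T3) := by
  constructor
  rw [Measure.restrict_apply_univ]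
  have hsub : T3 ⊆ Set.univ.pi fun _ : Fin 3 => Set.Icc (-π) π := by
    intro q hq i _
    exact Set.mem_Icc.2 (abs_le.1 (T3_abs_le hq i))
  exact lt_of_le_of_lt (measure_mono hsub)
    ((isCompact_univ_pi fun _ : Fin 3 => isCompact_Icc).measure_lt_top)


/-- If `φ` is real-analytic, even, not identically zero on `𝕋³`, with `φ(0) = 0`,
and `μ₀ = (∫ φ(t)²/u(0,t) dt)⁻¹`, then `f(q) = φ(q)/u(0,q)` is a nonzero element
of `L²(𝕋³)` satisfying `h_{μ₀}(0) f = 0`; i.e. `0` is an eigenvalue of `h_{μ₀}(0)`. -/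
theorem stmt12 (φ : (Fin 3 → ℝ) → ℝ) (hφ : ∀ x, AnalyticAt ℝ φ x)
    (hev : ∀ t, φ (-t) = φ t) (hφ0 : φ 0 = 0)
    (hne : ∃ t ∈ T3, φ t ≠ 0)
    (μ₀ : ℝ) (hμ₀ : μ₀ = (∫ t in T3, φ t ^ 2 / uu 0 t)⁻¹) :
    MemLp (fun q => φ q / uu 0 q) 2 (volume.restrict T3) ∧
    ¬ (∀ᵐ q ∂(volume.restrict T3), φ q / uu 0 q = 0) ∧
    (∀ q ∈ T3,
      uu 0 q * (φ q / uu 0 q) - μ₀ * φ q * (∫ t in T3, φ t * (φ t / uu 0 t)) = 0) := by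
  have hcont : Continuous φ := continuous_iff_continuousAt.2 fun x => (hφ x).continuousAt
  obtain ⟨B, hB, hbd⟩ := ratio_bound φ hφ hev hφ0
  have hmeas : Measurable fun q => φ q / uu 0 q :=
    hcont.measurable.div uu_cont.measurable
  haveI := T3_finite
  -- Part 1
  have part1 : MemLp (fun q => φ q / uu 0 q) 2 (volume.restrict T3) := by
    apply MemLp.of_bound hmeas.aestronglyMeasurable B
    rw [ae_restrict_iff' measT3]
    exact Filter.Eventually.of_forall fun q hq => by
      rw [Real.norm_eq_abs]; exact hbd q hq
  -- Part 2
  have part2 : ¬ (∀ᵐ q ∂(volume.restrict T3), φ q / uu 0 q = 0) := by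
    intro hae
    obtain ⟨t₀, ht₀, hφt₀⟩ := hne
    have ht0ne : t₀ ≠ 0 := fun h => hφt₀ (h ▸ hφ0)
    have hut₀ : uu 0 t₀ ≠ 0 := by
      rw [uu_zero]; have := eps_pos (T3_abs_le ht₀) ht0ne; positivity
    set U : Set (Fin 3 → ℝ) := {q | φ q ≠ 0} ∩ {q | uu 0 q ≠ 0} with hU
    have hUopen : IsOpen U :=
      (isOpen_compl_iff.2 (isClosed_eq hcont continuous_const)).inter
        (isOpen_compl_iff.2 (isClosed_eq uu_cont continuous_const))
    have ht₀U : t₀ ∈ U := ⟨hφt₀, hut₀⟩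
    set V : Set (Fin 3 → ℝ) := U ∩ Set.univ.pi fun _ : Fin 3 => Set.Ioo (-π) π with hV
    have hVopen : IsOpen V := hUopen.inter (isOpen_set_pi Set.finite_univ fun _ _ => isOpen_Ioo)
    have hVne : V.Nonempty := by
      have hcl : t₀ ∈ closure (Set.univ.pi fun _ : Fin 3 => Set.Ioo (-π) π) := by
        rw [closure_pi_set]
        intro i _
        simp only [Function.comp]
        rw [closure_Ioo (by linarith [Real.pi_pos] : -π ≠ π)]
        exact Set.mem_Icc.2 (abs_le.1 (T3_abs_le ht₀ i))
      rcases (_root_.mem_closure_iff.1 hcl) U hUopen ht₀U with ⟨x, hx⟩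
      exact ⟨x, hx.1, hx.2⟩
    have hVnull : volume V = 0 := by
      rw [ae_restrict_iff' measT3] at hae
      have hsub : V ⊆ {q | ¬ (q ∈ T3 → φ q / uu 0 q = 0)} := by
        rintro q ⟨⟨hq1, hq2⟩, hq3⟩
        intro hc
        have hqT3 : q ∈ T3 := fun i hi => Set.mem_Ioc.2 ⟨(hq3 i hi).1, (hq3 i hi).2.le⟩
        exact div_ne_zero hq1 hq2 (hc hqT3)
      exact measure_mono_null hsub hae
    exact (hVopen.measure_pos volume hVne).ne' hVnull
  refine ⟨part1, part2, ?_⟩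
  -- Part 3
  have hint_eq : (∫ t in T3, φ t * (φ t / uu 0 t)) = ∫ t in T3, φ t ^ 2 / uu 0 t := by
    congr 1
    funext t
    rw [sq, mul_div_assoc]
  intro q hq
  rcases eq_or_ne (φ q) 0 with h0 | h0
  · simp [h0]
  · have hq0 : q ≠ 0 := fun h => h0 (h ▸ hφ0)
    have hu : uu 0 q ≠ 0 := by
      rw [uu_zero]; have := eps_pos (T3_abs_le hq) hq0; positivity
    rw [mul_div_cancel₀ _ hu, hint_eq, hμ₀]
    have hI : (∫ t in T3, φ t ^ 2 / uu 0 t) ≠ 0 := by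
      intro hI0
      have hnn : ∀ t, 0 ≤ φ t ^ 2 / uu 0 t := fun t => by
        have := eps_nonneg t
        have : 0 ≤ uu 0 t := by rw [uu_zero]; linarith
        positivity
      obtain ⟨M, hM⟩ := (isCompact_univ_pi fun _ : Fin 3 => isCompact_Icc (a := -π)
        (b := π)).exists_bound_of_continuousOn hcont.continuousOn
      have hIntg : Integrable (fun t => φ t ^ 2 / uu 0 t) (volume.restrict T3) := by
        rw [← memLp_one_iff_integrable]
        apply MemLp.of_bound
          ((hcont.pow 2).measurable.div uu_cont.measurable).aestronglyMeasurable
          (M * B)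
        rw [ae_restrict_iff' measT3]
        refine Filter.Eventually.of_forall fun t ht => ?_
        have h1 := hbd t ht
        have h2 : ‖φ t‖ ≤ M := hM t fun i _ => Set.mem_Icc.2 (abs_le.1 (T3_abs_le ht i))
        calc ‖φ t ^ 2 / uu 0 t‖ = |φ t| * |φ t / uu 0 t| := by
              rw [Real.norm_eq_abs, sq, mul_div_assoc, abs_mul]
          _ ≤ M * B := mul_le_mul (by simpa [Real.norm_eq_abs] using h2) h1
              (abs_nonneg _) ((norm_nonneg _).trans h2)
      have := (integral_eq_zero_iff_of_nonneg hnn hIntg).1 hI0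
      have hae2 : ∀ᵐ t ∂(volume.restrict T3), φ t / uu 0 t = 0 := by
        filter_upwards [this] with t ht
        by_cases hu' : uu 0 t = 0
        · simp [hu']
        · have h2 : φ t ^ 2 = 0 := by
            rcases div_eq_zero_iff.1 ht with h | h
            · exact h
            · exact absurd h hu'
          have h3 : φ t = 0 := by nlinarith [sq_nonneg (φ t), sq_abs (φ t), abs_nonneg (φ t)]
          simp [h3]
      exact part2 hae2
    field_simp
    ring
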